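/- Let n ≥ 1, θ ∈ ℝⁿ, and let G₁, …, G_n be independent standard Gumbel random variables. Then the maximum value max_{1 ≤ i ≤ n} (θ_i + G_i) and the (almost surely unique) maximizing index argmax_{1 ≤ i ≤ n} (θ_i + G_i) are independent random variables. (This independence property underlies the closed-form reparameterization of θ + G given the discrete outcome D used by the Gumbel-Rao Monte Carlo estimator.) -/

import Mathlib

open MeasureTheory Set Filter

noncomputable def gumbelF (c x : ℝ) : ℝ := Real.exp (-(c * Real.exp (-x)))
noncomputable def gumbelg (c x : ℝ) : ℝ := c * Real.exp (-x) * gumbelF c x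

lemma gumbelF_nonneg (c x : ℝ) : 0 ≤ gumbelF c x := (Real.exp_pos _).le

lemma gumbelg_nonneg {c : ℝ} (hc : 0 ≤ c) (x : ℝ) : 0 ≤ gumbelg c x :=
  mul_nonneg (mul_nonneg hc (Real.exp_pos _).le) (Real.exp_pos _).le

lemma continuous_gumbelF (c : ℝ) : Continuous (gumbelF c) := by
  unfold gumbelF; fun_prop

lemma continuous_gumbelg (c : ℝ) : Continuous (gumbelg c) := by
  unfold gumbelg gumbelF; fun_prop

lemma hasDerivAt_gumbelF (c x : ℝ) : HasDerivAt (gumbelF c) (gumbelg c x) x := by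
  have h0 : HasDerivAt (fun y : ℝ => Real.exp (-y)) (-Real.exp (-x)) x := by
    have h := (Real.hasDerivAt_exp (-x)).comp x (hasDerivAt_neg x)
    simp only [mul_neg, mul_one] at h
    exact h
  have h1 : HasDerivAt (fun y : ℝ => -(c * Real.exp (-y))) (c * Real.exp (-x)) x := by
    have h := (h0.const_mul c).neg
    simp only [mul_neg, neg_neg] at h
    exact h
  have h2 := (Real.hasDerivAt_exp (-(c * Real.exp (-x)))).comp x h1
  rw [mul_comm (Real.exp _)] at h2
  exact h2

lemma tendsto_gumbelF_atBot {c : ℝ} (hc : 0 < c) : Tendsto (gumbelF c) atBot (nhds 0) := by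
  have h1 : Tendsto (fun x : ℝ => c * Real.exp (-x)) atBot atTop :=
    (Real.tendsto_exp_atTop.comp tendsto_neg_atBot_atTop).const_mul_atTop hc
  exact Real.tendsto_exp_atBot.comp (tendsto_neg_atTop_atBot.comp h1)

lemma tendsto_gumbelF_atTop (c : ℝ) : Tendsto (gumbelF c) atTop (nhds 1) := by
  have h1 : Tendsto (fun x : ℝ => -(c * Real.exp (-x))) atTop (nhds 0) := by
    simpa using ((Real.tendsto_exp_atBot.comp tendsto_neg_atTop_atBot).const_mul c).neg
  have h2 := (Real.continuous_exp.tendsto 0).comp h1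
  rw [Real.exp_zero] at h2
  exact h2

lemma integrableOn_gumbelg {c : ℝ} (hc : 0 ≤ c) (b : ℝ) :
    IntegrableOn (gumbelg c) (Iic b) := by
  apply integrableOn_Iic_of_intervalIntegral_norm_bounded (f := gumbelg c)
    (a := fun i : ℕ => -(i : ℝ)) (l := atTop) (gumbelF c b) b
  · intro i; exact (continuous_gumbelg c).integrableOn_Ioc
  · exact tendsto_neg_atTop_atBot.comp tendsto_natCast_atTop_atTop
  · have hev : ∀ᶠ i : ℕ in atTop, -(i : ℝ) ≤ b := by
      filter_upwards [eventually_ge_atTop ⌈-b⌉₊] with i hi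
      have h2 : (-b) ≤ (i : ℝ) := Nat.ceil_le.mp hi
      linarith
    filter_upwards [hev] with i _
    have hnorm : (fun x => ‖gumbelg c x‖) = gumbelg c :=
      funext fun x => by rw [Real.norm_eq_abs, abs_of_nonneg (gumbelg_nonneg hc x)]
    rw [hnorm, intervalIntegral.integral_eq_sub_of_hasDerivAt
      (fun x _ => hasDerivAt_gumbelF c x) ((continuous_gumbelg c).intervalIntegrable _ _)]
    exact sub_le_self _ (gumbelF_nonneg _ _)

lemma integral_Iic_gumbelg {c : ℝ} (hc : 0 < c) (b : ℝ) :
    ∫ x in Iic b, gumbelg c x = gumbelF c b := by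
  rw [integral_Iic_of_hasDerivAt_of_tendsto' (fun x _ => hasDerivAt_gumbelF c x)
    (integrableOn_gumbelg hc.le b) (tendsto_gumbelF_atBot hc), sub_zero]

lemma gumbel_law {Ω : Type*} {ℱ : MeasurableSpace Ω} (μ : Measure Ω)
    [IsProbabilityMeasure μ] {c : ℝ} (hc : 0 < c) {Y : Ω → ℝ} (hY : Measurable Y)
    (hcdf : ∀ x, μ {ω | Y ω ≤ x} = ENNReal.ofReal (gumbelF c x)) :
    Measure.map Y μ = volume.withDensity (fun x => ENNReal.ofReal (gumbelg c x)) := by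
  have : IsProbabilityMeasure (Measure.map Y μ) := Measure.isProbabilityMeasure_map hY.aemeasurable
  refine Measure.ext_of_Iic _ _ (fun a => ?_)
  rw [Measure.map_apply hY measurableSet_Iic, withDensity_apply _ measurableSet_Iic,
    ← ofReal_integral_eq_lintegral_ofReal (integrableOn_gumbelg hc.le a)
      (ae_of_all _ (gumbelg_nonneg hc.le)), integral_Iic_gumbelg hc a]
  exact hcdf a

theorem gumbel_aux {Ω : Type*} {ℱ : MeasurableSpace Ω} (μ : Measure Ω)
    [IsProbabilityMeasure μ] {n : ℕ} (hn : 1 ≤ n) (c : Fin n → ℝ) (hc : ∀ i, 0 < c i)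
    (X : Fin n → Ω → ℝ) (hXmeas : ∀ i, Measurable (X i))
    (hXindep : ProbabilityTheory.iIndepFun X μ)
    (hXcdf : ∀ i x, μ {ω | X i ω ≤ x} = ENNReal.ofReal (gumbelF (c i) x))
    (J : Ω → Fin n) (hJmeas : Measurable J)
    (hJ : ∀ᵐ ω ∂μ, ∀ i, i ≠ J ω → X i ω < X (J ω) ω) :
    ProbabilityTheory.IndepFun (fun ω => ⨆ i, X i ω) J μ := by
  haveI : Nonempty (Fin n) := ⟨⟨0, hn⟩⟩
  set S : ℝ := ∑ i, c i with hSdef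
  have hSpos : 0 < S := Finset.sum_pos (fun i _ => hc i) Finset.univ_nonempty
  set M : Ω → ℝ := fun ω => ⨆ i, X i ω with hMdef
  have hMmeas : Measurable M := Measurable.iSup hXmeas
  have hbdd : ∀ ω, BddAbove (range fun i => X i ω) := fun ω => (finite_range _).bddAbove
  -- laws of the X i
  have hlaw : ∀ i, Measure.map (X i) μ
      = volume.withDensity (fun x => ENNReal.ofReal (gumbelg (c i) x)) :=
    fun i => gumbel_law μ (hc i) (hXmeas i) (fun x => hXcdf i x)
  have hIic : ∀ (i : Fin n) (x : ℝ),
      μ (X i ⁻¹' Iic x) = ENNReal.ofReal (gumbelF (c i) x) := fun i x => hXcdf i x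
  have hIio : ∀ (i : Fin n) (x : ℝ),
      μ (X i ⁻¹' Iio x) = ENNReal.ofReal (gumbelF (c i) x) := by
    intro i x
    have h1 : μ (X i ⁻¹' Iio x) = Measure.map (X i) μ (Iio x) :=
      (Measure.map_apply (hXmeas i) measurableSet_Iio).symm
    have h2 : μ (X i ⁻¹' Iic x) = Measure.map (X i) μ (Iic x) :=
      (Measure.map_apply (hXmeas i) measurableSet_Iic).symm
    have hatom : Measure.map (X i) μ {x} = 0 := by
      rw [hlaw i, withDensity_apply _ (measurableSet_singleton x),
        Measure.restrict_eq_zero.mpr Real.volume_singleton, lintegral_zero_measure]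
    have h3 : Measure.map (X i) μ (Iic x) = Measure.map (X i) μ (Iio x) := by
      refine le_antisymm ?_ (measure_mono Iio_subset_Iic_self)
      calc Measure.map (X i) μ (Iic x) = Measure.map (X i) μ (Iio x ∪ {x}) := by
            rw [Iio_union_right]
        _ ≤ Measure.map (X i) μ (Iio x) + Measure.map (X i) μ {x} := measure_union_le _ _
        _ = Measure.map (X i) μ (Iio x) := by rw [hatom, add_zero]
    have h4 : μ (X i ⁻¹' Iic x) = ENNReal.ofReal (gumbelF (c i) x) := hXcdf i x
    rw [h1, ← h3, ← h2, h4]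
  -- product formula
  have hprodF : ∀ (T : Finset (Fin n)) (x : ℝ),
      (∏ i ∈ T, ENNReal.ofReal (gumbelF (c i) x))
        = ENNReal.ofReal (gumbelF (∑ i ∈ T, c i) x) := by
    intro T x
    rw [← ENNReal.ofReal_prod_of_nonneg (fun i _ => gumbelF_nonneg _ _)]
    congr 1
    unfold gumbelF
    rw [← Real.exp_sum]
    congr 1
    rw [Finset.sum_mul, ← Finset.sum_neg_distrib]
  have hprod : ∀ (T : Finset (Fin n)) (x : ℝ),
      μ (⋂ i ∈ T, X i ⁻¹' Iio x) = ENNReal.ofReal (gumbelF (∑ i ∈ T, c i) x) := by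
    intro T x
    rw [ProbabilityTheory.iIndepFun_iff_measure_inter_preimage_eq_mul.mp hXindep T
      (fun i _ => measurableSet_Iio)]
    rw [Finset.prod_congr rfl (fun i _ => hIio i x), hprodF]
  -- cdf of the max
  have hmax : ∀ t : ℝ, μ (M ⁻¹' Iic t) = ENNReal.ofReal (gumbelF S t) := by
    intro t
    have hset : M ⁻¹' Iic t = ⋂ i ∈ Finset.univ, X i ⁻¹' Iic t := by
      ext ω
      simp only [mem_preimage, mem_Iic, Finset.mem_univ, iInter_true, mem_iInter, hMdef]
      exact ciSup_le_iff (hbdd ω)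
    rw [hset, ProbabilityTheory.iIndepFun_iff_measure_inter_preimage_eq_mul.mp hXindep
      Finset.univ (fun i _ => measurableSet_Iic)]
    rw [Finset.prod_congr rfl (fun i _ => hIic i t), hprodF, hSdef]
  -- the strict-argmax sets
  set B : Fin n → Set Ω := fun j => ⋂ i ∈ Finset.univ.erase j, {ω | X i ω < X j ω} with hBdef
  have hBmeas : ∀ j, MeasurableSet (B j) := fun j =>
    MeasurableSet.biInter (Finset.univ.erase j).countable_toSet
      (fun i _ => measurableSet_lt (hXmeas i) (hXmeas j))
  have hBmem : ∀ j ω, ω ∈ B j ↔ ∀ i, i ≠ j → X i ω < X j ω := by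
    intro j ω
    simp only [hBdef, mem_iInter, Finset.mem_erase, Finset.mem_univ, and_true, mem_setOf_eq]
  have hJB : ∀ j, ∀ᵐ ω ∂μ, (J ω = j ↔ ω ∈ B j) := by
    intro j
    filter_upwards [hJ] with ω hω
    constructor
    · intro h
      rw [hBmem]
      intro i hi
      rw [← h] at hi ⊢
      exact hω i hi
    · intro hB
      by_contra hne
      have h1 : X j ω < X (J ω) ω := hω j (Ne.symm hne)
      have h2 : X (J ω) ω < X j ω := (hBmem j ω).mp hB (J ω) (fun h => hne h)
      exact absurd h1 (asymm h2)
  have hMB : ∀ j ω, ω ∈ B j → M ω = X j ω := by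
    intro j ω hB
    refine le_antisymm (ciSup_le fun i => ?_) (le_ciSup (hbdd ω) j)
    by_cases hij : i = j
    · rw [hij]
    · exact ((hBmem j ω).mp hB i hij).le
  -- the core computation
  have hcore : ∀ (j : Fin n) (t : ℝ),
      μ ({ω | X j ω ≤ t} ∩ B j) = ENNReal.ofReal (c j / S * gumbelF S t) := by
    intro j t
    set T : Finset (Fin n) := Finset.univ.erase j with hTdef
    set Y : Ω → ({i // i ∈ T} → ℝ) := fun ω i => X i.1 ω with hYdef
    have hYmeas : Measurable Y := measurable_pi_lambda _ (fun i => hXmeas i.1)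
    haveI : IsProbabilityMeasure (Measure.map Y μ) :=
      Measure.isProbabilityMeasure_map hYmeas.aemeasurable
    have hSsub : ∑ i ∈ T, c i = S - c j := by
      have := Finset.sum_erase_add Finset.univ c (Finset.mem_univ j)
      rw [hTdef]
      linarith
    have hSsub_nonneg : 0 ≤ S - c j := by
      rw [← hSsub]
      exact Finset.sum_nonneg (fun i _ => (hc i).le)
    -- independence of X j and the rest
    have hindep : ProbabilityTheory.IndepFun (X j) Y μ := by
      have hdisj : Disjoint ({j} : Finset (Fin n)) T :=
        Finset.disjoint_singleton_left.mpr (Finset.notMem_erase j _)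
      have h0 := hXindep.indepFun_finset {j} T hdisj hXmeas
      have h1 := h0.comp (φ := fun v : {i // i ∈ ({j} : Finset (Fin n))} → ℝ =>
        v ⟨j, Finset.mem_singleton_self j⟩) (ψ := id)
        (measurable_pi_apply _ : Measurable fun v : {i // i ∈ ({j} : Finset (Fin n))} → ℝ =>
          v ⟨j, Finset.mem_singleton_self j⟩) measurable_id
      exact h1
    have hmap : μ.map (fun ω => (X j ω, Y ω)) = (μ.map (X j)).prod (μ.map Y) :=
      (ProbabilityTheory.indepFun_iff_map_prod_eq_prod_map_map
        (hXmeas j).aemeasurable hYmeas.aemeasurable).mp hindep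
    set E : Set (ℝ × ({i // i ∈ T} → ℝ)) := {p | p.1 ≤ t ∧ ∀ i, p.2 i < p.1} with hEdef
    have hE : MeasurableSet E := by
      have hE2 : E = {p : ℝ × ({i // i ∈ T} → ℝ) | p.1 ≤ t}
          ∩ ⋂ i, {p : ℝ × ({i // i ∈ T} → ℝ) | p.2 i < p.1} := by
        ext p; simp [hEdef, mem_iInter]
      rw [hE2]
      exact (measurableSet_le measurable_fst measurable_const).inter
        (MeasurableSet.iInter fun i =>
          measurableSet_lt (measurable_snd.eval) measurable_fst)
    have hpreE : (fun ω => (X j ω, Y ω)) ⁻¹' E = {ω | X j ω ≤ t} ∩ B j := by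
      ext ω
      simp only [hEdef, mem_preimage, mem_setOf_eq, mem_inter_iff, hBmem, hYdef,
        Subtype.forall, hTdef, Finset.mem_erase, Finset.mem_univ, and_true]
    have hslice : (fun x => (μ.map Y) (Prod.mk x ⁻¹' E))
        = Set.indicator (Iic t) (fun x => ENNReal.ofReal (gumbelF (S - c j) x)) := by
      funext x
      by_cases hx : x ≤ t
      · rw [Set.indicator_of_mem (mem_Iic.mpr hx)]
        have h1 : Prod.mk x ⁻¹' E = ⋂ i, {y : {i // i ∈ T} → ℝ | y i < x} := by
          ext y; simp [hEdef, hx, mem_iInter]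
        have h2 : Y ⁻¹' (⋂ i, {y : {i // i ∈ T} → ℝ | y i < x}) = ⋂ i ∈ T, X i ⁻¹' Iio x := by
          ext ω
          simp only [mem_preimage, mem_iInter, mem_setOf_eq, hYdef, Subtype.forall, mem_Iio]
        rw [h1, Measure.map_apply hYmeas
          (MeasurableSet.iInter fun i => measurableSet_lt (measurable_pi_apply i)
            measurable_const), h2, hprod T x, hSsub]
      · rw [Set.indicator_of_notMem (by simpa using hx)]
        have h1 : Prod.mk x ⁻¹' E = ∅ := by
          ext y; simp [hEdef, hx]
        rw [h1, measure_empty]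
    have hcalc : μ ({ω | X j ω ≤ t} ∩ B j)
        = ∫⁻ x in Iic t, ENNReal.ofReal (gumbelF (S - c j) x) ∂(μ.map (X j)) := by
      rw [← hpreE, ← Measure.map_apply ((hXmeas j).prodMk hYmeas) hE, hmap,
        Measure.prod_apply hE]
      rw [lintegral_congr (fun x => congrFun hslice x),
        lintegral_indicator measurableSet_Iic _]
    rw [hcalc, hlaw j, restrict_withDensity measurableSet_Iic,
      lintegral_withDensity_eq_lintegral_mul _
        ((continuous_gumbelg (c j)).measurable.ennreal_ofReal)
        ((continuous_gumbelF (S - c j)).measurable.ennreal_ofReal)]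
    have hptwise : (fun x => ENNReal.ofReal (gumbelg (c j) x)
          * ENNReal.ofReal (gumbelF (S - c j) x))
        = fun x => ENNReal.ofReal (c j / S * gumbelg S x) := by
      funext x
      rw [← ENNReal.ofReal_mul (gumbelg_nonneg (hc j).le x)]
      congr 1
      have hFF : gumbelF (c j) x * gumbelF (S - c j) x = gumbelF S x := by
        unfold gumbelF
        rw [← Real.exp_add]
        congr 1
        ring
      unfold gumbelg
      rw [mul_assoc (c j * Real.exp (-x)), hFF]
      field_simp
    calc ∫⁻ x in Iic t, (fun x => ENNReal.ofReal (gumbelg (c j) x)) x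
          * (fun x => ENNReal.ofReal (gumbelF (S - c j) x)) x
        = ∫⁻ x in Iic t, ENNReal.ofReal (c j / S * gumbelg S x) :=
          lintegral_congr fun x => congrFun hptwise x
      _ = ENNReal.ofReal (∫ x in Iic t, c j / S * gumbelg S x) := by
          rw [ofReal_integral_eq_lintegral_ofReal
            ((integrableOn_gumbelg hSpos.le t).const_mul _)
            (ae_of_all _ (fun x => mul_nonneg (div_nonneg (hc j).le hSpos.le)
              (gumbelg_nonneg hSpos.le x)))]
      _ = ENNReal.ofReal (c j / S * gumbelF S t) := by
          rw [integral_const_mul, integral_Iic_gumbelg hSpos]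
  -- measure of B j
  have hBmeasure : ∀ j, μ (B j) = ENNReal.ofReal (c j / S) := by
    intro j
    have hunion : B j = ⋃ k : ℕ, ({ω | X j ω ≤ (k : ℝ)} ∩ B j) := by
      ext ω
      simp only [mem_iUnion, mem_inter_iff, mem_setOf_eq]
      constructor
      · intro h
        obtain ⟨k, hk⟩ := exists_nat_ge (X j ω)
        exact ⟨k, hk, h⟩
      · rintro ⟨k, _, h⟩
        exact h
    have hmono : Monotone (fun k : ℕ => {ω | X j ω ≤ (k : ℝ)} ∩ B j) := by
      intro a b hab
      refine inter_subset_inter (fun ω hω => ?_) subset_rfl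
      simp only [mem_setOf_eq] at hω ⊢
      exact le_trans hω (by exact_mod_cast hab)
    have h1 := tendsto_measure_iUnion_atTop (μ := μ) hmono
    have h2 : Tendsto (fun k : ℕ => μ ({ω | X j ω ≤ (k : ℝ)} ∩ B j)) atTop
        (nhds (ENNReal.ofReal (c j / S))) := by
      have h3 : Tendsto (fun k : ℕ => c j / S * gumbelF S k) atTop (nhds (c j / S)) := by
        have h4 := ((tendsto_gumbelF_atTop S).comp tendsto_natCast_atTop_atTop).const_mul
          (c j / S)
        simpa using h4
      have h5 := (ENNReal.continuous_ofReal.tendsto _).comp h3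
      simpa [Function.comp_def, hcore j] using h5
    have h6 := tendsto_nhds_unique h1 h2
    rw [hunion, ← h6]
  -- the factorization for singletons
  have hsingle : ∀ (j : Fin n) (s : Set ℝ), MeasurableSet s →
      μ (M ⁻¹' s ∩ J ⁻¹' {j}) = μ (M ⁻¹' s) * μ (J ⁻¹' {j}) := by
    intro j s hs
    have hJBj : (J ⁻¹' {j} : Set Ω) =ᵐ[μ] B j := by
      rw [Filter.eventuallyEq_set]
      filter_upwards [hJB j] with ω hω
      simpa using hω
    have hμJ : μ (J ⁻¹' {j}) = ENNReal.ofReal (c j / S) := by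
      rw [measure_congr hJBj, hBmeasure j]
    have hres : ∀ a : ℝ, μ (M ⁻¹' Iic a ∩ J ⁻¹' {j})
        = ENNReal.ofReal (c j / S * gumbelF S a) := by
      intro a
      have hae : (M ⁻¹' Iic a ∩ J ⁻¹' {j} : Set Ω) =ᵐ[μ] (({ω | X j ω ≤ a} ∩ B j : Set Ω)) := by
        rw [Filter.eventuallyEq_set]
        filter_upwards [hJB j] with ω hω
        simp only [mem_inter_iff, mem_preimage, mem_Iic, mem_singleton_iff, mem_setOf_eq]
        constructor
        · rintro ⟨hMa, hJj⟩
          have hB := hω.mp hJj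
          exact ⟨by rw [← hMB j ω hB]; exact hMa, hB⟩
        · rintro ⟨hXa, hB⟩
          exact ⟨by rw [hMB j ω hB]; exact hXa, hω.mpr hB⟩
      rw [measure_congr hae, hcore j a]
    set ρ₁ : Measure ℝ := Measure.map M (μ.restrict (J ⁻¹' {j})) with hρ₁
    set ρ₂ : Measure ℝ := μ (J ⁻¹' {j}) • Measure.map M μ with hρ₂
    haveI : IsFiniteMeasure ρ₁ := by
      constructor
      rw [hρ₁, Measure.map_apply hMmeas MeasurableSet.univ]
      exact lt_of_le_of_lt (measure_mono (subset_univ _)) (measure_lt_top _ _)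
    have heq : ρ₁ = ρ₂ := by
      apply Measure.ext_of_Iic
      intro a
      rw [hρ₁, hρ₂, Measure.map_apply hMmeas measurableSet_Iic,
        Measure.restrict_apply (hMmeas measurableSet_Iic), hres a, Measure.smul_apply,
        Measure.map_apply hMmeas measurableSet_Iic, hmax a, hμJ, smul_eq_mul,
        ← ENNReal.ofReal_mul (div_nonneg (hc j).le hSpos.le)]
    have h1 : ρ₁ s = μ (M ⁻¹' s ∩ J ⁻¹' {j}) := by
      rw [hρ₁, Measure.map_apply hMmeas hs, Measure.restrict_apply (hMmeas hs)]
    have h2 : ρ₂ s = μ (J ⁻¹' {j}) * μ (M ⁻¹' s) := by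
      rw [hρ₂, Measure.smul_apply, Measure.map_apply hMmeas hs, smul_eq_mul]
    rw [← h1, heq, h2, mul_comm]
  -- conclusion
  rw [ProbabilityTheory.indepFun_iff_measure_inter_preimage_eq_mul]
  intro s tset hs _
  have htfin := Set.toFinite tset
  have htse : J ⁻¹' tset = ⋃ j ∈ htfin.toFinset, J ⁻¹' ({j} : Set (Fin n)) := by
    ext ω
    simp [Set.Finite.mem_toFinset]
  have hmeas1 : ∀ j : Fin n, MeasurableSet (J ⁻¹' ({j} : Set (Fin n))) :=
    fun j => hJmeas (measurableSet_singleton j)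
  have hdisJ : Pairwise (Function.onFun Disjoint fun j => J ⁻¹' ({j} : Set (Fin n)))  := by
    intro a b hab
    refine Set.disjoint_left.mpr (fun ω hωa hωb => ?_)
    exact hab (by simp only [mem_preimage, mem_singleton_iff] at hωa hωb; rw [← hωa, ← hωb])
  have hdis1 : (↑htfin.toFinset : Set (Fin n)).PairwiseDisjoint
      (fun j => M ⁻¹' s ∩ J ⁻¹' ({j} : Set (Fin n))) := fun a _ b _ hab =>
    Disjoint.mono inter_subset_right inter_subset_right (hdisJ hab)
  have hdis2 : (↑htfin.toFinset : Set (Fin n)).PairwiseDisjoint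
      (fun j => J ⁻¹' ({j} : Set (Fin n))) := fun a _ b _ hab => hdisJ hab
  calc μ (M ⁻¹' s ∩ J ⁻¹' tset)
      = μ (⋃ j ∈ htfin.toFinset, (M ⁻¹' s ∩ J ⁻¹' ({j} : Set (Fin n)))) := by
        rw [htse, Set.inter_iUnion₂]
    _ = ∑ j ∈ htfin.toFinset, μ (M ⁻¹' s ∩ J ⁻¹' ({j} : Set (Fin n))) :=
        measure_biUnion_finset hdis1 (fun j _ => (hMmeas hs).inter (hmeas1 j))
    _ = ∑ j ∈ htfin.toFinset, μ (M ⁻¹' s) * μ (J ⁻¹' ({j} : Set (Fin n))) :=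
        Finset.sum_congr rfl (fun j _ => hsingle j s hs)
    _ = μ (M ⁻¹' s) * ∑ j ∈ htfin.toFinset, μ (J ⁻¹' ({j} : Set (Fin n))) := by
        rw [Finset.mul_sum]
    _ = μ (M ⁻¹' s) * μ (J ⁻¹' tset) := by
        rw [htse, measure_biUnion_finset hdis2 (fun j _ => hmeas1 j)]


/-- **Independence of the Gumbel maximum and argmax.** If `G₁, …, G_n` are independent
standard Gumbel random variables, then the maximum value `max_i (θ_i + G_i)` and the (almost
surely unique) maximizing index are independent: any measurable `J : Ω → Fin n` that is almost
surely the strict maximizer of `i ↦ θ_i + G_i` is independent of the maximum value. -/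
theorem gumbel_max_argmax_indep {Ω : Type*} {ℱ : MeasurableSpace Ω} (μ : Measure Ω)
    [IsProbabilityMeasure μ] (n : ℕ) (hn : 1 ≤ n) (θ : Fin n → ℝ)
    (G : Fin n → Ω → ℝ) (hGmeas : ∀ i, Measurable (G i))
    (hGindep : ProbabilityTheory.iIndepFun G μ)
    (hGcdf : ∀ i, ∀ x : ℝ,
      (μ {ω | G i ω ≤ x}).toReal = Real.exp (-Real.exp (-x)))
    (J : Ω → Fin n) (hJmeas : Measurable J)
    (hJ : ∀ᵐ ω ∂μ, ∀ i, i ≠ J ω → θ i + G i ω < θ (J ω) + G (J ω) ω) :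
    ProbabilityTheory.IndepFun (fun ω => ⨆ i : Fin n, (θ i + G i ω)) J μ := by
  have hXmeas : ∀ i, Measurable (fun ω => θ i + G i ω) :=
    fun i => (hGmeas i).const_add (θ i)
  have hXindep : ProbabilityTheory.iIndepFun
      (fun i ω => θ i + G i ω) μ := by
    have h := hGindep.comp (g := fun i (x : ℝ) => θ i + x)
      (fun i => measurable_const.add measurable_id)
    exact h
  have hXcdf : ∀ (i : Fin n) (x : ℝ), μ {ω | θ i + G i ω ≤ x}
      = ENNReal.ofReal (gumbelF (Real.exp (θ i)) x) := by
    intro i x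
    have hset : {ω | θ i + G i ω ≤ x} = {ω | G i ω ≤ x - θ i} := by
      ext ω
      simp only [Set.mem_setOf_eq]
      constructor <;> intro h <;> linarith
    have h2 : μ {ω | G i ω ≤ x - θ i}
        = ENNReal.ofReal (Real.exp (-Real.exp (-(x - θ i)))) := by
      rw [← hGcdf i (x - θ i), ENNReal.ofReal_toReal (measure_ne_top μ _)]
    rw [hset, h2]
    congr 1
    unfold gumbelF
    have h3 : Real.exp (-(x - θ i)) = Real.exp (θ i) * Real.exp (-x) := by
      rw [← Real.exp_add]
      congr 1
      ring
    rw [h3]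
  exact gumbel_aux μ hn (fun i => Real.exp (θ i)) (fun i => Real.exp_pos _)
    (fun i ω => θ i + G i ω) hXmeas hXindep hXcdf J hJmeas hJ
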